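/- For all natural numbers n ≥ 0 and all k with 0 ≤ k ≤ ⌊n/2⌋, the identity Σ_{i=k}^{⌊n/2⌋} C(n+1, 2i+1) · C(i, k) = 2^{n−2k} · C(n−k, k) holds. -/

import Mathlib

open Finset

private lemma pair_sum_aux (f : ℕ → ℕ) (M : ℕ) :
    ∑ j ∈ range (2*M), f j = ∑ i ∈ range M, f (2*i) + ∑ i ∈ range M, f (2*i+1) := by
  induction M with
  | zero => simp
  | succ M ih =>
    have h : 2*(M+1) = (2*M)+1+1 := by ring
    rw [h, sum_range_succ, sum_range_succ, sum_range_succ, sum_range_succ, ih]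
    ring_nf

private lemma odd_sum_aux (n : ℕ) : ∑ i ∈ range (n+1), (n+1).choose (2*i+1) = 2^n := by
  have h1 : ∀ i ∈ range (n+1), (n+1).choose (2*i+1) = n.choose (2*i) + n.choose (2*i+1) := by
    intro i _
    exact Nat.choose_succ_succ n (2*i)
  rw [sum_congr rfl h1, sum_add_distrib, ← pair_sum_aux]
  have h2 : ∑ j ∈ range (2*(n+1)), n.choose j = ∑ j ∈ range (n+1), n.choose j := by
    symm
    apply sum_subset
    · apply range_subset_range.2; omega
    · intro x _ hx
      simp only [mem_range] at hx
      exact Nat.choose_eq_zero_of_lt (by omega)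
  rw [h2, Nat.sum_range_choose]

private lemma rec_int_aux (n k : ℕ) : ∀ N : ℕ,
    (∑ i ∈ Icc (k+1) N, ((n+3).choose (2*i+1) * i.choose (k+1) : ℤ))
      + (n+1).choose (2*N+1) * N.choose (k+1)
    = (∑ i ∈ Icc (k+1) N, 2 * ((n+2).choose (2*i+1) * i.choose (k+1) : ℤ))
      + ∑ j ∈ Ico k N, ((n+1).choose (2*j+1) * j.choose k : ℤ) := by
  intro N
  induction N with
  | zero => simp
  | succ N ih =>
    rcases lt_or_ge N k with hNk | hNk
    · have he1 : Icc (k+1) (N+1) = ∅ := Icc_eq_empty (by omega)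
      have he2 : Ico k (N+1) = ∅ := Ico_eq_empty (by omega)
      have hc : (N+1).choose (k+1) = 0 := Nat.choose_eq_zero_of_lt (by omega)
      simp [he1, he2, hc]
    · rw [Finset.sum_Icc_succ_top (by omega : k+1 ≤ N+1),
          Finset.sum_Icc_succ_top (by omega : k+1 ≤ N+1),
          Finset.sum_Ico_succ_top (by omega : k ≤ N)]
      have h1 : (n+3).choose (2*(N+1)+1)
          = (n+1).choose (2*N+1) + 2*((n+1).choose (2*N+2)) + (n+1).choose (2*N+3) := by
        have e : 2*(N+1)+1 = (2*N+2)+1 := by ring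
        rw [e, show n+3 = (n+2)+1 from rfl, Nat.choose_succ_succ,
            show (n+2) = (n+1)+1 from rfl,
            Nat.choose_succ_succ (n+1) (2*N+1), Nat.choose_succ_succ (n+1) (2*N+2)]
        simp only [Nat.succ_eq_add_one, show 2*N+1+1 = 2*N+2 from rfl,
          show 2*N+2+1 = 2*N+3 from rfl]
        omega
      have h2 : (n+2).choose (2*(N+1)+1)
          = (n+1).choose (2*N+2) + (n+1).choose (2*N+3) := by
        have e : 2*(N+1)+1 = (2*N+2)+1 := by ring
        rw [e, show n+2 = (n+1)+1 from rfl, Nat.choose_succ_succ]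
      have h3 : (N+1).choose (k+1) = N.choose k + N.choose (k+1) :=
        Nat.choose_succ_succ N k
      have e2 : 2*(N+1)+1 = 2*N+3 := by ring
      rw [h1, h2, h3, e2]
      push_cast
      linear_combination ih

private lemma sum_ext_aux (a b N c k : ℕ) (hb : b ≤ N) (hz : ∀ i, b < i → c < 2*i+1) :
    ∑ i ∈ Icc a b, c.choose (2*i+1) * i.choose k
      = ∑ i ∈ Icc a N, c.choose (2*i+1) * i.choose k := by
  apply sum_subset (Icc_subset_Icc_right hb)
  intro x hx hx'
  simp only [mem_Icc] at hx hx'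
  rw [Nat.choose_eq_zero_of_lt (hz x (by omega)), zero_mul]

private lemma recN_aux (m k : ℕ) :
    (∑ i ∈ Icc (k+1) ((m+2)/2), (m+3).choose (2*i+1) * i.choose (k+1))
    = 2 * (∑ i ∈ Icc (k+1) ((m+1)/2), (m+2).choose (2*i+1) * i.choose (k+1))
      + ∑ i ∈ Icc k (m/2), (m+1).choose (2*i+1) * i.choose k := by
  rw [sum_ext_aux (k+1) ((m+2)/2) (m+2) (m+3) (k+1) (by omega) (fun i hi => by omega),
      sum_ext_aux (k+1) ((m+1)/2) (m+2) (m+2) (k+1) (by omega) (fun i hi => by omega),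
      sum_ext_aux k (m/2) (m+1) (m+1) k (by omega) (fun i hi => by omega)]
  have key := rec_int_aux m k (m+2)
  rw [Nat.choose_eq_zero_of_lt (show m+1 < 2*(m+2)+1 by omega)] at key
  rw [show Ico k (m+2) = Icc k (m+1) from Finset.Ico_add_one_right_eq_Icc (a := k) (b := m+1)] at key
  rw [← Finset.mul_sum] at key
  push_cast at key
  simp only [zero_mul, add_zero] at key
  exact_mod_cast key

private lemma main_aux : ∀ n k : ℕ,
    (∑ i ∈ Finset.Icc k (n / 2), Nat.choose (n + 1) (2 * i + 1) * Nat.choose i k) =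
      2 ^ (n - 2 * k) * Nat.choose (n - k) k := by
  intro n
  induction n using Nat.strong_induction_on with
  | _ n ih =>
    rcases n with _ | _ | m
    · intro k
      rcases k with _ | k
      · simp
      · rw [Icc_eq_empty (by omega)]
        simp [Nat.choose_eq_zero_of_lt (show 0 - (k+1) < k+1 by omega)]
    · intro k
      rcases k with _ | k
      · simp
      · rw [show (1:ℕ)/2 = 0 by norm_num, Icc_eq_empty (by omega)]
        simp [Nat.choose_eq_zero_of_lt (show 1 - (k+1) < k+1 by omega)]
    · intro k
      rcases k with _ | k
      · -- k = 0
        simp only [Nat.choose_zero_right, mul_one, Nat.sub_zero, Nat.mul_zero]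
        have e := sum_ext_aux 0 ((m+2)/2) (m+2) (m+3) 0 (by omega) (fun i hi => by omega)
        simp only [Nat.choose_zero_right, mul_one] at e
        rw [e, show Icc 0 (m+2) = range (m+3) by
              rw [Finset.range_eq_Ico, show Ico 0 (m+3) = Icc 0 (m+2) from Finset.Ico_add_one_right_eq_Icc (a := 0) (b := m+2)],
            odd_sum_aux (m+2)]
      · -- k = k'+1
        rw [recN_aux m k, ih (m+1) (by omega) (k+1), ih m (by omega) k]
        rcases lt_trichotomy m (2*k) with h | h | h
        · rw [Nat.choose_eq_zero_of_lt (show m+1-(k+1) < k+1 by omega),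
              Nat.choose_eq_zero_of_lt (show m-k < k by omega),
              Nat.choose_eq_zero_of_lt (show m+2-(k+1) < k+1 by omega)]
          simp
        · subst h
          rw [show 2*k+1-(k+1) = k by omega, Nat.choose_succ_self,
              show 2*k-k = k by omega, Nat.choose_self,
              show 2*k+2-(k+1) = k+1 by omega, Nat.choose_self,
              show 2*k+1+1-2*(k+1) = 0 by omega]
          simp
        · obtain ⟨t, rfl⟩ : ∃ t, m = 2*k+1+t := ⟨m-(2*k+1), by omega⟩
          rw [show 2*k+1+t+1-2*(k+1) = t by omega,
              show 2*k+1+t+1-(k+1) = k+1+t by omega,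
              show 2*k+1+t-2*k = t+1 by omega,
              show 2*k+1+t-k = k+1+t by omega,
              show 2*k+1+t+2-2*(k+1) = t+1 by omega,
              show 2*k+1+t+2-(k+1) = (k+1+t)+1 by omega,
              Nat.choose_succ_succ (k+1+t) k]
          ring

theorem stmt_10 (n k : ℕ) (hk : k ≤ n / 2) :
    (∑ i ∈ Finset.Icc k (n / 2), Nat.choose (n + 1) (2 * i + 1) * Nat.choose i k) =
      2 ^ (n - 2 * k) * Nat.choose (n - k) k := by
  exact main_aux n k
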